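/- Let x₀ > 0 and let q : [0,x₀] → ℝ be nonnegative, monotone increasing and differentiable with q'(x) ≤ (2/15)·q(0) for all x ∈ [0,x₀]. Let z ≥ √(11·q(x₀)), let φ be the Prüfer angle of q at z, let i ≥ 0 be an integer with (i+1)π ≤ z, and let a ≤ b in (0,x₀] satisfy φ(a) = iπ + π/2 and φ(b) = iπ + 3π/2. Then ∫ₐᵇ (q(x)/z)·(sin²φ(x) − φ(x)·sinφ(x)·cosφ(x)) dx − 2·∫ₐᵇ (q(x)/z)·sinφ(x)·cosφ(x)·( ∫ₐˣ (q(s)/z)·sin²φ(s) ds ) dx ≥ 0. -/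

import Mathlib

open Real Set

private lemma sincos_nonpos (n : ℕ) {u : ℝ} (h1 : n * π + π / 2 ≤ u) (h2 : u ≤ ((n:ℝ) + 1) * π) :
    Real.sin u * Real.cos u ≤ 0 := by
  have key : Real.sin (2 * u) ≤ 0 := by
    have h := Real.sin_add_nat_mul_two_pi (2 * u - ((n:ℝ) + 1) * (2 * π)) (n + 1)
    have hEq : 2 * u - ((n:ℝ) + 1) * (2 * π) + ((n:ℕ) + 1 : ℕ) * (2 * π) = 2 * u := by
      push_cast; ring
    rw [hEq] at h
    rw [h]
    apply Real.sin_nonpos_of_nonpos_of_neg_pi_le <;> nlinarith [Real.pi_pos]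
  nlinarith [Real.sin_two_mul u]

private lemma sincos_nonneg (n : ℕ) {u : ℝ} (h1 : ((n:ℝ) + 1) * π ≤ u) (h2 : u ≤ n * π + 3 * π / 2) :
    0 ≤ Real.sin u * Real.cos u := by
  have key : 0 ≤ Real.sin (2 * u) := by
    have h := Real.sin_add_nat_mul_two_pi (2 * u - ((n:ℝ) + 1) * (2 * π)) (n + 1)
    have hEq : 2 * u - ((n:ℝ) + 1) * (2 * π) + ((n:ℕ) + 1 : ℕ) * (2 * π) = 2 * u := by
      push_cast; ring
    rw [hEq] at h
    rw [h]
    apply Real.sin_nonneg_of_nonneg_of_le_pi <;> nlinarith [Real.pi_pos]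
  nlinarith [Real.sin_two_mul u]

private lemma ftc_phi {φ P H h : ℝ → ℝ} {x₁ x₂ : ℝ} (h12 : x₁ ≤ x₂)
    (hφ : ∀ x ∈ Icc x₁ x₂, HasDerivAt φ (P x) x)
    (hH : ∀ u, HasDerivAt H (h u) u)
    (hint : IntervalIntegrable (fun x => h (φ x) * P x) MeasureTheory.volume x₁ x₂) :
    ∫ x in x₁..x₂, h (φ x) * P x = H (φ x₂) - H (φ x₁) := by
  have hd : ∀ x ∈ Set.uIcc x₁ x₂, HasDerivAt (fun y => H (φ y)) (h (φ x) * P x) x := by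
    intro x hx
    rw [Set.uIcc_of_le h12] at hx
    exact (hH (φ x)).comp x (hφ x hx)
  exact intervalIntegral.integral_eq_sub_of_hasDerivAt hd hint

private lemma hd_sq (u : ℝ) :
    HasDerivAt (fun v => (v - Real.sin v * Real.cos v) / 2) (Real.sin u ^ 2) u := by
  have h := ((hasDerivAt_id u).sub ((Real.hasDerivAt_sin u).mul (Real.hasDerivAt_cos u))).div_const 2
  refine h.congr_deriv ?_
  have := Real.sin_sq_add_cos_sq u
  ring_nf
  nlinarith [this]

private lemma hd_sc (u : ℝ) :
    HasDerivAt (fun v => Real.sin v ^ 2 / 2) (Real.sin u * Real.cos u) u := by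
  have h := (((Real.hasDerivAt_sin u).pow 2)).div_const 2
  refine h.congr_deriv ?_
  ring

private lemma hd_s3c (u : ℝ) :
    HasDerivAt (fun v => Real.sin v ^ 4 / 4) (Real.sin u ^ 3 * Real.cos u) u := by
  have h := (((Real.hasDerivAt_sin u).pow 4)).div_const 4
  refine h.congr_deriv ?_
  ring

private lemma hd_s4 (u : ℝ) :
    HasDerivAt (fun v => 3 * v / 8 - 3 * (Real.sin v * Real.cos v) / 8 - Real.sin v ^ 3 * Real.cos v / 4)
      (Real.sin u ^ 4) u := by
  have h1 := (hasDerivAt_id u).const_mul (3:ℝ)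
  have h2 := (Real.hasDerivAt_sin u).mul (Real.hasDerivAt_cos u)
  have h3 := (((Real.hasDerivAt_sin u).pow 3)).mul (Real.hasDerivAt_cos u)
  have h := ((h1.div_const 8).sub ((h2.const_mul (3:ℝ)).div_const 8)).sub (h3.div_const 4)
  refine h.congr_deriv ?_
  have := Real.sin_sq_add_cos_sq u
  simp only [Pi.pow_apply]
  ring_nf
  nlinarith [this]

private lemma hd_tw (γ : ℝ) (u : ℝ) :
    HasDerivAt (fun v => (v - γ) * Real.sin v ^ 2 / 2 - (v - Real.sin v * Real.cos v) / 4)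
      ((u - γ) * (Real.sin u * Real.cos u)) u := by
  have h1 := (((hasDerivAt_id u).sub_const γ).mul ((Real.hasDerivAt_sin u).pow 2)).div_const 2
  have h2 := ((hasDerivAt_id u).sub ((Real.hasDerivAt_sin u).mul (Real.hasDerivAt_cos u))).div_const 4
  have h := h1.sub h2
  refine h.congr_deriv ?_
  have := Real.sin_sq_add_cos_sq u
  simp only [id_eq, Pi.pow_apply]
  nlinarith [this]

private lemma hd_ts3c (γ : ℝ) (u : ℝ) :
    HasDerivAt (fun v => (v - γ) * Real.sin v ^ 4 / 4
        - (3 * v / 8 - 3 * (Real.sin v * Real.cos v) / 8 - Real.sin v ^ 3 * Real.cos v / 4) / 4)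
      ((u - γ) * (Real.sin u ^ 3 * Real.cos u)) u := by
  have h1 := (((hasDerivAt_id u).sub_const γ).mul ((Real.hasDerivAt_sin u).pow 4)).div_const 4
  have h2 := (hd_s4 u).div_const 4
  have h := h1.sub h2
  refine h.congr_deriv ?_
  simp only [id_eq, Pi.pow_apply]
  ring

private lemma hd_log (c z : ℝ) (hpos : ∀ v : ℝ, 0 < z - c * Real.sin v ^ 2) (u : ℝ) :
    HasDerivAt (fun v => -(1/2) * Real.log (z - c * Real.sin v ^ 2))
      (c * (Real.sin u * Real.cos u) / (z - c * Real.sin u ^ 2)) u := by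
  have hin : HasDerivAt (fun v => z - c * Real.sin v ^ 2)
      (-(c * (2 * Real.sin u * Real.cos u))) u := by
    have h := ((Real.hasDerivAt_sin u).pow 2).const_mul c
    have h' := (hasDerivAt_const u z).sub h
    refine h'.congr_deriv ?_
    ring
  have h := (hin.log (ne_of_gt (hpos u))).const_mul (-(1/2) : ℝ)
  refine h.congr_deriv ?_
  ring

private lemma final_arith (T K R I X Y p : ℝ) (hp : 0 < p)
    (hT : X * (p / 2) ≤ T) (hK : K ≤ 847 / 10000 * p * X) (hR : R ≤ Y * (17 * p / 64))
    (hI : I ≤ 473 / 1600 * p * (Y * Y)) (hY : Y ≤ 57 / 50 * X) (hY11 : Y ≤ 1 / 11)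
    (hY0 : 0 ≤ Y) (hX0 : 0 ≤ X) :
    0 ≤ T - (K + R) - 2 * I := by
  have pY : p * Y ≤ p * (57 / 50 * X) := mul_le_mul_of_nonneg_left hY hp.le
  have pYY : Y * Y ≤ 1 / 11 * Y := by nlinarith
  have pYY' : p * (Y * Y) ≤ p * (1 / 11 * Y) := mul_le_mul_of_nonneg_left pYY hp.le
  nlinarith [pY, pYY', hT, hK, hR, hI, mul_nonneg hp.le hX0, mul_nonneg hp.le hY0]

set_option maxHeartbeats 8000000 in
/-- Key estimate (3.21): nonnegativity of the combined half-period expression for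
z ≥ √(11·q(x₀)), when q is increasing with q' ≤ (2/15)·q(0) and (i+1)π ≤ z. -/
theorem combined_half_period_nonneg
    (x₀ : ℝ) (hx₀ : 0 < x₀)
    (q q' : ℝ → ℝ)
    (hqnonneg : ∀ x ∈ Icc 0 x₀, 0 ≤ q x)
    (hmono : MonotoneOn q (Icc 0 x₀))
    (hqdiff : ∀ x ∈ Icc 0 x₀, HasDerivAt q (q' x) x)
    (hq'bound : ∀ x ∈ Icc 0 x₀, q' x ≤ (2/15) * q 0)
    (z : ℝ) (hz : Real.sqrt (11 * q x₀) ≤ z)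
    (φ : ℝ → ℝ) (hφ0 : φ 0 = 0)
    (hφODE : ∀ x ∈ Icc 0 x₀, HasDerivAt φ (z - q x / z * Real.sin (φ x) ^ 2) x)
    (i : ℕ) (hi : ((i : ℝ) + 1) * π ≤ z)
    (a b : ℝ) (ha : a ∈ Ioc 0 x₀) (hb : b ∈ Ioc 0 x₀) (hab : a ≤ b)
    (hφa : φ a = i * π + π / 2) (hφb : φ b = i * π + 3 * π / 2) :
    (∫ x in a..b, (q x / z) *
        (Real.sin (φ x) ^ 2 - φ x * Real.sin (φ x) * Real.cos (φ x)))
      - 2 * (∫ x in a..b, (q x / z) * Real.sin (φ x) * Real.cos (φ x) *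
          (∫ s in a..x, (q s / z) * Real.sin (φ s) ^ 2)) ≥ 0 := by
  have hπ : (0:ℝ) < π := Real.pi_pos
  have hi0 : (0:ℝ) ≤ (i:ℝ) := Nat.cast_nonneg i
  have hzπ : π ≤ z := by nlinarith
  have hz0 : (0:ℝ) < z := lt_of_lt_of_le hπ hzπ
  have hsub : Icc a b ⊆ Icc 0 x₀ := fun x hx => ⟨le_trans ha.1.le hx.1, le_trans hx.2 hb.2⟩
  have hx₀mem : x₀ ∈ Icc (0:ℝ) x₀ := ⟨hx₀.le, le_refl _⟩
  have hq11 : ∀ x ∈ Icc (0:ℝ) x₀, 11 * q x ≤ z ^ 2 := by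
    intro x hx
    have h1 : q x ≤ q x₀ := hmono hx hx₀mem hx.2
    have h2 : (0:ℝ) ≤ 11 * q x₀ := by nlinarith [hqnonneg x₀ hx₀mem]
    nlinarith [Real.sq_sqrt h2, Real.sqrt_nonneg (11 * q x₀)]
  have hanb : a < b := by
    rcases lt_or_eq_of_le hab with h | h
    · exact h
    · exfalso; rw [h] at hφa; rw [hφa] at hφb; linarith
  -- abbreviations
  obtain ⟨P, hPdef⟩ : ∃ P : ℝ → ℝ, P = fun x => z - q x / z * Real.sin (φ x) ^ 2 := ⟨_, rfl⟩
  obtain ⟨γc, hγdef⟩ : ∃ γc : ℝ, γc = ((i:ℝ) + 1) * π := ⟨_, rfl⟩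
  have hPx : ∀ x, P x = z - q x / z * Real.sin (φ x) ^ 2 := fun x => by rw [hPdef]
  have hφP : ∀ t ∈ Icc a b, HasDerivAt φ (P t) t := fun t ht => by
    rw [hPx]; exact hφODE t (hsub ht)
  -- pointwise bounds on Icc a b
  have hq0 : ∀ x ∈ Icc a b, 0 ≤ q x := fun x hx => hqnonneg x (hsub hx)
  have hqA : ∀ x ∈ Icc a b, q a ≤ q x := fun x hx =>
    hmono (hsub (left_mem_Icc.mpr hab)) (hsub hx) hx.1
  have hqB : ∀ x ∈ Icc a b, q x ≤ q b := fun x hx =>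
    hmono (hsub hx) (hsub (right_mem_Icc.mpr hab)) hx.2
  have hq0A : q 0 ≤ q a := hmono ⟨le_refl _, hx₀.le⟩ (hsub (left_mem_Icc.mpr hab)) ha.1.le
  have hs01 : ∀ u : ℝ, 0 ≤ Real.sin u ^ 2 ∧ Real.sin u ^ 2 ≤ 1 := fun u =>
    ⟨sq_nonneg _, Real.sin_sq_le_one u⟩
  have hPle : ∀ x ∈ Icc a b, P x ≤ z := by
    intro x hx
    have := hq0 x hx
    have := (hs01 (φ x)).1
    have h5 : 0 ≤ q x / z * Real.sin (φ x) ^ 2 := by positivity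
    rw [hPx]; linarith
  have hPge : ∀ x ∈ Icc a b, 10 / 11 * z ≤ P x := by
    intro x hx
    have h1 := hq11 x (hsub hx)
    have h2 := hq0 x hx
    have h3 := (hs01 (φ x)).1
    have h4 := (hs01 (φ x)).2
    have h5 : q x / z * Real.sin (φ x) ^ 2 ≤ z / 11 := by
      rw [div_mul_eq_mul_div, div_le_div_iff₀ hz0 (by norm_num : (0:ℝ) < 11)]
      nlinarith
    rw [hPx]
    linarith
  have hPpos : ∀ x ∈ Icc a b, 0 < P x := fun x hx => lt_of_lt_of_le (by positivity) (hPge x hx)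
  have h10z : ∀ x ∈ Icc a b, 10 * z ≤ 11 * P x := by
    intro x hx; have h := hPge x hx; linarith
  have hzP : ∀ x ∈ Icc a b, z ≤ (1 + Real.sin (φ x) ^ 2 / 10) * P x := by
    intro x hx
    have h1 := hq11 x (hsub hx)
    have h2 := hq0 x hx
    have h3 := (hs01 (φ x)).1
    have h4 := (hs01 (φ x)).2
    rw [hPx]
    have hzz : z ≠ 0 := ne_of_gt hz0
    have expand : (1 + Real.sin (φ x) ^ 2 / 10) * (z - q x / z * Real.sin (φ x) ^ 2) - z
        = Real.sin (φ x) ^ 2 / (10 * z) * (z ^ 2 - 10 * q x - q x * Real.sin (φ x) ^ 2) := by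
      field_simp; ring
    have hh : 0 ≤ Real.sin (φ x) ^ 2 / (10 * z) * (z ^ 2 - 10 * q x - q x * Real.sin (φ x) ^ 2) :=
      mul_nonneg (by positivity) (by nlinarith)
    linarith [expand, hh]
  -- continuity
  have hφcont : ContinuousOn φ (Icc a b) := fun x hx =>
    (hφODE x (hsub hx)).continuousAt.continuousWithinAt
  have hqcont : ContinuousOn q (Icc a b) := fun x hx =>
    (hqdiff x (hsub hx)).continuousAt.continuousWithinAt
  have hPc : ContinuousOn P (Icc a b) := by
    rw [hPdef]
    apply continuousOn_const.sub
    exact (hqcont.div_const z).mul ((Real.continuous_sin.comp_continuousOn hφcont).pow 2)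
  -- FTC master
  have key : ∀ (H h : ℝ → ℝ), (∀ u, HasDerivAt H (h u) u) → Continuous h →
      ∀ x y, a ≤ x → x ≤ y → y ≤ b →
      ∫ t in x..y, h (φ t) * P t = H (φ y) - H (φ x) := by
    intro H h hH hh x y hax hxy hyb
    have hxy' : Icc x y ⊆ Icc a b := Icc_subset_Icc hax hyb
    refine ftc_phi hxy (fun t ht => hφP t (hxy' ht)) hH ?_
    apply ContinuousOn.intervalIntegrable
    rw [Set.uIcc_of_le hxy]
    exact ((hh.comp_continuousOn (hφcont.mono hxy')).mul (hPc.mono hxy'))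
  -- endpoint trig values
  have hca : Real.cos (φ a) = 0 := by
    rw [hφa, Real.cos_add_pi_div_two, Real.sin_nat_mul_pi, neg_zero]
  have hsa2 : Real.sin (φ a) ^ 2 = 1 := by
    rw [hφa, Real.sin_add_pi_div_two]
    have h := Real.sin_sq_add_cos_sq ((i:ℝ) * π)
    rw [Real.sin_nat_mul_pi] at h; nlinarith
  have hβeq : (i:ℝ) * π + 3 * π / 2 = ((i:ℝ) * π + π) + π / 2 := by ring
  have hsipπ : Real.sin ((i:ℝ) * π + π) = 0 := by
    have h := Real.sin_nat_mul_pi (i + 1)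
    push_cast at h
    rw [show ((i:ℝ) + 1) * π = (i:ℝ) * π + π by ring] at h
    exact h
  have hcb : Real.cos (φ b) = 0 := by
    rw [hφb, hβeq, Real.cos_add_pi_div_two, hsipπ, neg_zero]
  have hsb2 : Real.sin (φ b) ^ 2 = 1 := by
    rw [hφb, hβeq, Real.sin_add_pi_div_two]
    have h := Real.sin_sq_add_cos_sq ((i:ℝ) * π + π)
    rw [hsipπ] at h; nlinarith
  have hsγ : Real.sin γc = 0 := by
    rw [hγdef, show ((i:ℝ) + 1) * π = (i:ℝ) * π + π by ring]; exact hsipπ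
  -- φ increments as integrals of P
  have hφdiff : ∀ x y, a ≤ x → x ≤ y → y ≤ b → φ y - φ x = ∫ t in x..y, 1 * P t := by
    intro x y h1 h2 h3
    rw [key (fun u => u) (fun _ => 1) (fun u => hasDerivAt_id' u) continuous_const x y h1 h2 h3]
  have hφle : ∀ x y, a ≤ x → x ≤ y → y ≤ b → φ x ≤ φ y := by
    intro x y h1 h2 h3
    have e := hφdiff x y h1 h2 h3
    have hn : 0 ≤ ∫ t in x..y, 1 * P t :=
      intervalIntegral.integral_nonneg h2 (fun t ht => by
        have := hPpos t ⟨le_trans h1 ht.1, le_trans ht.2 h3⟩; nlinarith)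
    linarith
  have hφmem : ∀ x ∈ Icc a b, (i:ℝ) * π + π / 2 ≤ φ x ∧ φ x ≤ (i:ℝ) * π + 3 * π / 2 := by
    intro x hx
    constructor
    · rw [← hφa]; exact hφle a x le_rfl hx.1 hx.2
    · rw [← hφb]; exact hφle x b hx.1 hx.2 le_rfl
  have hγαβ : φ a ≤ γc ∧ γc ≤ φ b := by
    rw [hφa, hφb, hγdef]; constructor <;> nlinarith
  obtain ⟨c, hcmem, hφc⟩ : ∃ c ∈ Icc a b, φ c = γc := by
    have h := intermediate_value_Icc hab hφcont
    obtain ⟨c, hc1, hc2⟩ := h ⟨hγαβ.1, hγαβ.2⟩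
    exact ⟨c, hc1, hc2⟩
  have hwn : ∀ x ∈ Icc a c, Real.sin (φ x) * Real.cos (φ x) ≤ 0 := by
    intro x hx
    have hxm : x ∈ Icc a b := ⟨hx.1, le_trans hx.2 hcmem.2⟩
    refine sincos_nonpos i (hφmem x hxm).1 ?_
    rw [← hγdef, ← hφc]
    exact hφle x c hx.1 hx.2 hcmem.2
  have hwp : ∀ x ∈ Icc c b, 0 ≤ Real.sin (φ x) * Real.cos (φ x) := by
    intro x hx
    have hxm : x ∈ Icc a b := ⟨le_trans hcmem.1 hx.1, hx.2⟩
    refine sincos_nonneg i ?_ (hφmem x hxm).2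
    rw [← hγdef, ← hφc]
    exact hφle c x hcmem.1 hx.1 hx.2
  have htw : ∀ x ∈ Icc a b, 0 ≤ (φ x - γc) * (Real.sin (φ x) * Real.cos (φ x)) := by
    intro x hx
    rcases le_total (φ x) γc with h | h
    · have hw : Real.sin (φ x) * Real.cos (φ x) ≤ 0 :=
        sincos_nonpos i (hφmem x hx).1 (by rw [hγdef] at h; exact h)
      nlinarith
    · have hw : 0 ≤ Real.sin (φ x) * Real.cos (φ x) :=
        sincos_nonneg i (by rw [hγdef] at h; exact h) (hφmem x hx).2
      nlinarith
  -- comparison helpers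
  have intHP : ∀ (h : ℝ → ℝ), Continuous h → ∀ x y, a ≤ x → x ≤ y → y ≤ b →
      IntervalIntegrable (fun t => h (φ t) * P t) MeasureTheory.volume x y := by
    intro h hh x y hax hxy hyb
    have hxy' : Icc x y ⊆ Icc a b := Icc_subset_Icc hax hyb
    apply ContinuousOn.intervalIntegrable
    rw [Set.uIcc_of_le hxy]
    exact ((hh.comp_continuousOn ((hφcont.mono hxy'))).mul (hPc.mono hxy'))
  have mkInt : ∀ {f : ℝ → ℝ} (x y : ℝ), a ≤ x → x ≤ y → y ≤ b → ContinuousOn f (Icc a b) →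
      IntervalIntegrable f MeasureTheory.volume x y := by
    intro f x y hax hxy hyb hf
    apply ContinuousOn.intervalIntegrable
    rw [Set.uIcc_of_le hxy]
    exact hf.mono (Icc_subset_Icc hax hyb)
  have cmp_le : ∀ (f H h : ℝ → ℝ), (∀ u, HasDerivAt H (h u) u) → Continuous h →
      ∀ x y, a ≤ x → x ≤ y → y ≤ b → ContinuousOn f (Icc x y) →
      (∀ t ∈ Icc x y, f t ≤ h (φ t) * P t) →
      ∫ t in x..y, f t ≤ H (φ y) - H (φ x) := by
    intro f H h hH hh x y hax hxy hyb hfc hle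
    rw [← key H h hH hh x y hax hxy hyb]
    refine intervalIntegral.integral_mono_on hxy ?_ (intHP h hh x y hax hxy hyb) hle
    apply ContinuousOn.intervalIntegrable
    rwa [Set.uIcc_of_le hxy]
  have cmp_ge : ∀ (f H h : ℝ → ℝ), (∀ u, HasDerivAt H (h u) u) → Continuous h →
      ∀ x y, a ≤ x → x ≤ y → y ≤ b → ContinuousOn f (Icc x y) →
      (∀ t ∈ Icc x y, h (φ t) * P t ≤ f t) →
      H (φ y) - H (φ x) ≤ ∫ t in x..y, f t := by
    intro f H h hH hh x y hax hxy hyb hfc hle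
    rw [← key H h hH hh x y hax hxy hyb]
    refine intervalIntegral.integral_mono_on hxy (intHP h hh x y hax hxy hyb) ?_ hle
    apply ContinuousOn.intervalIntegrable
    rwa [Set.uIcc_of_le hxy]
  -- length bound
  have hba : b - a ≤ 21 * π / (20 * z) := by
    have hH : ∀ u : ℝ, HasDerivAt (fun v => (v + (v - Real.sin v * Real.cos v) / 2 / 10) / z)
        ((1 + Real.sin u ^ 2 / 10) / z) u :=
      fun u => ((hasDerivAt_id' u).add ((hd_sq u).div_const 10)).div_const z
    have hh : Continuous (fun u : ℝ => (1 + Real.sin u ^ 2 / 10) / z) := by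
      exact (continuous_const.add ((Real.continuous_sin.pow 2).div_const 10)).div_const z
    have hcmp := cmp_le (fun _ => (1:ℝ)) _ _ hH hh a b le_rfl hab le_rfl continuousOn_const ?ptw
    case ptw =>
      intro t ht
      have h1 := hzP t ht
      have h2 := hPpos t ht
      rw [div_mul_eq_mul_div, le_div_iff₀ hz0]
      linarith
    have hval : ((φ b + (φ b - Real.sin (φ b) * Real.cos (φ b)) / 2 / 10) / z)
        - ((φ a + (φ a - Real.sin (φ a) * Real.cos (φ a)) / 2 / 10) / z) = 21 * π / (20 * z) := by
      rw [hca, hcb, mul_zero, mul_zero, hφa, hφb]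
      field_simp
      ring
    have hone : ∫ t in a..b, (1:ℝ) = b - a := by simp
    rw [hone] at hcmp
    linarith [hcmp, hval.le, hval.ge]
  -- increment of q
  have hδ0 : 0 ≤ q b - q a := by
    have := hqA b (right_mem_Icc.mpr hab); linarith
  have hδ : q b - q a ≤ 7 * π / 50 * (q a / z) := by
    obtain ⟨ξ, hξ, hsl⟩ := exists_hasDerivAt_eq_slope q q' hanb hqcont
      (fun x hx => hqdiff x (hsub ⟨hx.1.le, hx.2.le⟩))
    have h1 : q' ξ ≤ 2 / 15 * q 0 := hq'bound ξ (hsub ⟨hξ.1.le, hξ.2.le⟩)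
    have hqa0 : 0 ≤ q a := hq0 a (left_mem_Icc.mpr hab)
    have h2 : q b - q a = q' ξ * (b - a) := by
      rw [hsl]; field_simp [ne_of_gt (show (0:ℝ) < b - a by linarith)]
    have h3 : q' ξ * (b - a) ≤ 2 / 15 * q a * (b - a) := by
      apply mul_le_mul_of_nonneg_right _ (by linarith : (0:ℝ) ≤ b - a)
      linarith [hq0A]
    have h4 : 2 / 15 * q a * (b - a) ≤ 2 / 15 * q a * (21 * π / (20 * z)) := by
      apply mul_le_mul_of_nonneg_left hba (by positivity)
    have h5 : 2 / 15 * q a * (21 * π / (20 * z)) = 7 * π / 50 * (q a / z) := by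
      field_simp; ring
    linarith
  -- generic pointwise upper bound
  have hptU : ∀ t ∈ Icc a b, ∀ f : ℝ, 0 ≤ f →
      q t / z * f ≤ q b / z ^ 2 * (f * ((1 + Real.sin (φ t) ^ 2 / 10) * P t)) := by
    intro t ht f hf
    have h1 := hzP t ht
    have h2 := hqB t ht
    have h3 := hq0 t ht
    have hqb0 : (0:ℝ) ≤ q b := le_trans h3 h2
    calc q t / z * f ≤ q b / z * f := by gcongr
      _ = q b / z ^ 2 * (f * z) := by field_simp
      _ ≤ q b / z ^ 2 * (f * ((1 + Real.sin (φ t) ^ 2 / 10) * P t)) := by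
          apply mul_le_mul_of_nonneg_left _ (by positivity)
          exact mul_le_mul_of_nonneg_left h1 hf
  -- lower bound for T0
  have hT0low : q a / z ^ 2 * (π / 2) ≤ ∫ t in a..b, q t / z * Real.sin (φ t) ^ 2 := by
    have hH : ∀ u : ℝ, HasDerivAt (fun v => q a / z ^ 2 * ((v - Real.sin v * Real.cos v) / 2))
        (q a / z ^ 2 * Real.sin u ^ 2) u := fun u => (hd_sq u).const_mul (q a / z ^ 2)
    have hh : Continuous (fun u : ℝ => q a / z ^ 2 * Real.sin u ^ 2) := by
      exact continuous_const.mul (Real.continuous_sin.pow 2)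
    have hcmp := cmp_ge (fun t => q t / z * Real.sin (φ t) ^ 2) _ _ hH hh a b le_rfl hab le_rfl
      ((hqcont.div_const z).mul ((Real.continuous_sin.comp_continuousOn hφcont).pow 2)) ?ptw
    case ptw =>
      intro t ht
      have h1 := hPle t ht
      have h2 := hqA t ht
      have h3 := hq0 a (left_mem_Icc.mpr hab)
      have hs := (hs01 (φ t)).1
      calc q a / z ^ 2 * Real.sin (φ t) ^ 2 * P t
          ≤ q a / z ^ 2 * Real.sin (φ t) ^ 2 * z := by
            apply mul_le_mul_of_nonneg_left h1 (by positivity)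
        _ = q a / z * Real.sin (φ t) ^ 2 := by field_simp
        _ ≤ q t / z * Real.sin (φ t) ^ 2 := by gcongr
    have hval : q a / z ^ 2 * ((φ b - Real.sin (φ b) * Real.cos (φ b)) / 2)
        - q a / z ^ 2 * ((φ a - Real.sin (φ a) * Real.cos (φ a)) / 2) = q a / z ^ 2 * (π / 2) := by
      rw [hca, hcb, mul_zero, mul_zero, hφa, hφb]; ring
    linarith [hcmp, hval.ge, hval.le]
  -- upper bound for T0
  have hT0up : (∫ t in a..b, q t / z * Real.sin (φ t) ^ 2) ≤ q b / z ^ 2 * (43 * π / 80) := by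
    have hH : ∀ u : ℝ, HasDerivAt (fun v => q b / z ^ 2 *
        ((v - Real.sin v * Real.cos v) / 2
          + (3 * v / 8 - 3 * (Real.sin v * Real.cos v) / 8 - Real.sin v ^ 3 * Real.cos v / 4) / 10))
        (q b / z ^ 2 * (Real.sin u ^ 2 + Real.sin u ^ 4 / 10)) u :=
      fun u => ((hd_sq u).add ((hd_s4 u).div_const 10)).const_mul (q b / z ^ 2)
    have hh : Continuous (fun u : ℝ => q b / z ^ 2 * (Real.sin u ^ 2 + Real.sin u ^ 4 / 10)) := by
      exact continuous_const.mul (((Real.continuous_sin.pow 2)).add ((Real.continuous_sin.pow 4).div_const 10))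
    have hcmp := cmp_le (fun t => q t / z * Real.sin (φ t) ^ 2) _ _ hH hh a b le_rfl hab le_rfl
      ((hqcont.div_const z).mul ((Real.continuous_sin.comp_continuousOn hφcont).pow 2)) ?ptw
    case ptw =>
      intro t ht
      have h1 := hptU t ht (Real.sin (φ t) ^ 2) (hs01 (φ t)).1
      calc q t / z * Real.sin (φ t) ^ 2
          ≤ q b / z ^ 2 * (Real.sin (φ t) ^ 2 * ((1 + Real.sin (φ t) ^ 2 / 10) * P t)) := h1
        _ = q b / z ^ 2 * (Real.sin (φ t) ^ 2 + Real.sin (φ t) ^ 4 / 10) * P t := by ring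
    have hval : q b / z ^ 2 * ((φ b - Real.sin (φ b) * Real.cos (φ b)) / 2
          + (3 * φ b / 8 - 3 * (Real.sin (φ b) * Real.cos (φ b)) / 8 - Real.sin (φ b) ^ 3 * Real.cos (φ b) / 4) / 10)
        - q b / z ^ 2 * ((φ a - Real.sin (φ a) * Real.cos (φ a)) / 2
          + (3 * φ a / 8 - 3 * (Real.sin (φ a) * Real.cos (φ a)) / 8 - Real.sin (φ a) ^ 3 * Real.cos (φ a) / 4) / 10)
        = q b / z ^ 2 * (43 * π / 80) := by
      rw [hca, hcb, hφa, hφb]; ring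
    linarith [hcmp, hval.ge, hval.le]
  -- upper bound for R
  have hR : (∫ t in a..b, q t / z * ((φ t - γc) * (Real.sin (φ t) * Real.cos (φ t))))
      ≤ q b / z ^ 2 * (17 * π / 64) := by
    have hH : ∀ u : ℝ, HasDerivAt (fun v => q b / z ^ 2 *
        (((v - γc) * Real.sin v ^ 2 / 2 - (v - Real.sin v * Real.cos v) / 4)
          + ((v - γc) * Real.sin v ^ 4 / 4
            - (3 * v / 8 - 3 * (Real.sin v * Real.cos v) / 8 - Real.sin v ^ 3 * Real.cos v / 4) / 4) / 10))
        (q b / z ^ 2 * ((u - γc) * (Real.sin u * Real.cos u) + (u - γc) * (Real.sin u ^ 3 * Real.cos u) / 10)) u :=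
      fun u => ((hd_tw γc u).add ((hd_ts3c γc u).div_const 10)).const_mul (q b / z ^ 2)
    have hh : Continuous (fun u : ℝ => q b / z ^ 2 *
        ((u - γc) * (Real.sin u * Real.cos u) + (u - γc) * (Real.sin u ^ 3 * Real.cos u) / 10)) := by
      apply continuous_const.mul
      apply Continuous.add
      · exact (continuous_id.sub continuous_const).mul (Real.continuous_sin.mul Real.continuous_cos)
      · exact (((continuous_id.sub continuous_const).mul ((Real.continuous_sin.pow 3).mul Real.continuous_cos))).div_const 10
    have hcmp := cmp_le (fun t => q t / z * ((φ t - γc) * (Real.sin (φ t) * Real.cos (φ t)))) _ _ hH hh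
      a b le_rfl hab le_rfl ?cont ?ptw
    case cont =>
      apply (hqcont.div_const z).mul
      apply ContinuousOn.mul
      · exact (hφcont.sub continuousOn_const)
      · exact (Real.continuous_sin.comp_continuousOn hφcont).mul (Real.continuous_cos.comp_continuousOn hφcont)
    case ptw =>
      intro t ht
      have h1 := hptU t ht ((φ t - γc) * (Real.sin (φ t) * Real.cos (φ t))) (htw t ht)
      calc q t / z * ((φ t - γc) * (Real.sin (φ t) * Real.cos (φ t)))
          ≤ q b / z ^ 2 * (((φ t - γc) * (Real.sin (φ t) * Real.cos (φ t))) * ((1 + Real.sin (φ t) ^ 2 / 10) * P t)) := h1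
        _ = q b / z ^ 2 * ((φ t - γc) * (Real.sin (φ t) * Real.cos (φ t))
              + (φ t - γc) * (Real.sin (φ t) ^ 3 * Real.cos (φ t)) / 10) * P t := by ring
    have hval : q b / z ^ 2 *
        (((φ b - γc) * Real.sin (φ b) ^ 2 / 2 - (φ b - Real.sin (φ b) * Real.cos (φ b)) / 4)
          + ((φ b - γc) * Real.sin (φ b) ^ 4 / 4
            - (3 * φ b / 8 - 3 * (Real.sin (φ b) * Real.cos (φ b)) / 8 - Real.sin (φ b) ^ 3 * Real.cos (φ b) / 4) / 4) / 10)
        - q b / z ^ 2 *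
        (((φ a - γc) * Real.sin (φ a) ^ 2 / 2 - (φ a - Real.sin (φ a) * Real.cos (φ a)) / 4)
          + ((φ a - γc) * Real.sin (φ a) ^ 4 / 4
            - (3 * φ a / 8 - 3 * (Real.sin (φ a) * Real.cos (φ a)) / 8 - Real.sin (φ a) ^ 3 * Real.cos (φ a) / 4) / 4) / 10)
        = q b / z ^ 2 * (17 * π / 64) := by
      rw [hca, hcb,
        show Real.sin (φ b) ^ 4 = (Real.sin (φ b) ^ 2) ^ 2 from by ring,
        show Real.sin (φ a) ^ 4 = (Real.sin (φ a) ^ 2) ^ 2 from by ring,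
        hsa2, hsb2, hφa, hφb, hγdef]
      ring
    linarith [hcmp, hval.ge, hval.le]
  -- the K term
  have hqa11 : 11 * q a ≤ z ^ 2 := hq11 a (hsub (left_mem_Icc.mpr hab))
  have hqa0 : (0:ℝ) ≤ q a := hq0 a (left_mem_Icc.mpr hab)
  have hqb0 : (0:ℝ) ≤ q b := le_trans hqa0 (by linarith)
  have hden : ∀ u : ℝ, 0 < z - q a / z * Real.sin u ^ 2 := by
    intro u
    have h4 := (hs01 u).1
    have h5 := (hs01 u).2
    have h6 : q a / z * Real.sin u ^ 2 ≤ z / 11 := by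
      rw [div_mul_eq_mul_div, div_le_div_iff₀ hz0 (by norm_num : (0:ℝ) < 11)]
      nlinarith
    have h7 : z / 11 < z := by nlinarith
    linarith
  have hdenge : ∀ u : ℝ, 10 / 11 * z ≤ z - q a / z * Real.sin u ^ 2 := by
    intro u
    have h4 := (hs01 u).1
    have h5 := (hs01 u).2
    have h6 : q a / z * Real.sin u ^ 2 ≤ z / 11 := by
      rw [div_mul_eq_mul_div, div_le_div_iff₀ hz0 (by norm_num : (0:ℝ) < 11)]
      nlinarith
    linarith
  have hqaz2 : q a / z ^ 2 ≤ 1 / 11 := by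
    rw [div_le_div_iff₀ (by positivity) (by norm_num : (0:ℝ) < 11)]
    linarith
  have hcontw : ContinuousOn (fun t => Real.sin (φ t) * Real.cos (φ t)) (Icc a b) :=
    (Real.continuous_sin.comp_continuousOn hφcont).mul (Real.continuous_cos.comp_continuousOn hφcont)
  have hsubac : Icc a c ⊆ Icc a b := Icc_subset_Icc le_rfl hcmem.2
  have hsubcb : Icc c b ⊆ Icc a b := Icc_subset_Icc hcmem.1 le_rfl
  have hKK : (∫ t in a..b, q t / z * (Real.sin (φ t) * Real.cos (φ t)))
      ≤ 121 / 200 * ((q b - q a) / z ^ 2) := by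
    have hint_f0 : IntervalIntegrable
        (fun t => q a / z * (Real.sin (φ t) * Real.cos (φ t)) / (z - q a / z * Real.sin (φ t) ^ 2) * P t)
        MeasureTheory.volume a b := by
      apply intHP (fun u => q a / z * (Real.sin u * Real.cos u) / (z - q a / z * Real.sin u ^ 2)) ?_ a b le_rfl hab le_rfl
      exact (continuous_const.mul (Real.continuous_sin.mul Real.continuous_cos)).div
        (continuous_const.sub (continuous_const.mul (Real.continuous_sin.pow 2)))
        (fun u => ne_of_gt (hden u))
    have hcont_f1 : ContinuousOn (fun t => q a / z ^ 2 * ((q t - q a) *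
        ((Real.sin (φ t) * Real.cos (φ t)) * Real.sin (φ t) ^ 2 / (z - q a / z * Real.sin (φ t) ^ 2))))
        (Icc a b) := by
      apply continuousOn_const.mul
      apply (hqcont.sub continuousOn_const).mul
      apply ContinuousOn.div
      · exact hcontw.mul ((Real.continuous_sin.comp_continuousOn hφcont).pow 2)
      · exact continuousOn_const.sub (continuousOn_const.mul ((Real.continuous_sin.comp_continuousOn hφcont).pow 2))
      · exact fun t _ => ne_of_gt (hden (φ t))
    have hcont_f2 : ContinuousOn (fun t => (q t - q a) / z * (Real.sin (φ t) * Real.cos (φ t))) (Icc a b) :=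
      ((hqcont.sub continuousOn_const).div_const z).mul hcontw
    have hint_f1 := mkInt a b le_rfl hab le_rfl hcont_f1
    have hint_f2 := mkInt a b le_rfl hab le_rfl hcont_f2
    have hid : EqOn (fun t => q t / z * (Real.sin (φ t) * Real.cos (φ t)))
        (fun t => (q a / z * (Real.sin (φ t) * Real.cos (φ t)) / (z - q a / z * Real.sin (φ t) ^ 2) * P t
          + q a / z ^ 2 * ((q t - q a) *
            ((Real.sin (φ t) * Real.cos (φ t)) * Real.sin (φ t) ^ 2 / (z - q a / z * Real.sin (φ t) ^ 2))))
          + (q t - q a) / z * (Real.sin (φ t) * Real.cos (φ t))) (uIcc a b) := by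
      intro t _
      have hne : z - q a / z * Real.sin (φ t) ^ 2 ≠ 0 := ne_of_gt (hden (φ t))
      have hzne : z ≠ 0 := ne_of_gt hz0
      have hden' : z - q a / z * Real.sin (φ t) ^ 2 = (z ^ 2 - q a * Real.sin (φ t) ^ 2) / z := by
        field_simp
      have hpos2 : (0:ℝ) < z ^ 2 - q a * Real.sin (φ t) ^ 2 := by
        have e : (z - q a / z * Real.sin (φ t) ^ 2) * z = z ^ 2 - q a * Real.sin (φ t) ^ 2 := by
          field_simp
        nlinarith [mul_pos (hden (φ t)) hz0]
      have hne2 : z ^ 2 - q a * Real.sin (φ t) ^ 2 ≠ 0 := ne_of_gt hpos2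
      simp only
      rw [hPx, hden']
      field_simp
      rw [mul_comm (Real.sin (φ t) ^ 2) (q a), show q a * (z ^ 2 - q t * Real.sin (φ t) ^ 2 + Real.sin (φ t) ^ 2 * (q t - q a)) = q a * (z ^ 2 - q a * Real.sin (φ t) ^ 2) by ring, mul_div_assoc, div_self hne2]
      ring
    rw [intervalIntegral.integral_congr hid,
      intervalIntegral.integral_add (hint_f0.add hint_f1) hint_f2,
      intervalIntegral.integral_add hint_f0 hint_f1]
    have hzero : (∫ t in a..b, q a / z * (Real.sin (φ t) * Real.cos (φ t)) / (z - q a / z * Real.sin (φ t) ^ 2) * P t) = 0 := by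
      have hkey := key (fun v => -(1/2) * Real.log (z - q a / z * Real.sin v ^ 2))
        (fun u => q a / z * (Real.sin u * Real.cos u) / (z - q a / z * Real.sin u ^ 2))
        (hd_log (q a / z) z hden)
        ((continuous_const.mul (Real.continuous_sin.mul Real.continuous_cos)).div
          (continuous_const.sub (continuous_const.mul (Real.continuous_sin.pow 2)))
          (fun u => ne_of_gt (hden u)))
        a b le_rfl hab le_rfl
      rw [hsa2, hsb2] at hkey
      simpa using hkey
    rw [hzero]
    have hf1 : (∫ t in a..b, q a / z ^ 2 * ((q t - q a) *
        ((Real.sin (φ t) * Real.cos (φ t)) * Real.sin (φ t) ^ 2 / (z - q a / z * Real.sin (φ t) ^ 2))))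
        ≤ 11 * (q b - q a) / (200 * z ^ 2) := by
      rw [← intervalIntegral.integral_add_adjacent_intervals (b := c)
        (mkInt a c le_rfl hcmem.1 hcmem.2 hcont_f1)
        (mkInt c b hcmem.1 hcmem.2 le_rfl hcont_f1)]
      have hpart1 : (∫ t in a..c, q a / z ^ 2 * ((q t - q a) *
          ((Real.sin (φ t) * Real.cos (φ t)) * Real.sin (φ t) ^ 2 / (z - q a / z * Real.sin (φ t) ^ 2)))) ≤ 0 := by
        have hmono0 := intervalIntegral.integral_mono_on hcmem.1
          (mkInt a c le_rfl hcmem.1 hcmem.2 hcont_f1)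
          (intervalIntegrable_const (c := (0:ℝ)))
          (fun t ht => ?_)
        · simpa using hmono0
        · have htm : t ∈ Icc a b := hsubac ht
          have hw := hwn t ht
          have hs := (hs01 (φ t)).1
          have hqge := hqA t htm
          have hd := hden (φ t)
          have hX : (Real.sin (φ t) * Real.cos (φ t)) * Real.sin (φ t) ^ 2 / (z - q a / z * Real.sin (φ t) ^ 2) ≤ 0 :=
            div_nonpos_of_nonpos_of_nonneg (mul_nonpos_of_nonpos_of_nonneg hw hs) hd.le
          exact mul_nonpos_of_nonneg_of_nonpos (by positivity)
            (mul_nonpos_of_nonneg_of_nonpos (by linarith) hX)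
      have hpart2 : (∫ t in c..b, q a / z ^ 2 * ((q t - q a) *
          ((Real.sin (φ t) * Real.cos (φ t)) * Real.sin (φ t) ^ 2 / (z - q a / z * Real.sin (φ t) ^ 2))))
          ≤ 11 * (q b - q a) / (200 * z ^ 2) := by
        have hH : ∀ u : ℝ, HasDerivAt (fun v => 11 * (q b - q a) / (100 * z ^ 2) * (Real.sin v ^ 2 / 2))
            (11 * (q b - q a) / (100 * z ^ 2) * (Real.sin u * Real.cos u)) u :=
          fun u => (hd_sc u).const_mul _
        have hh : Continuous (fun u : ℝ => 11 * (q b - q a) / (100 * z ^ 2) * (Real.sin u * Real.cos u)) :=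
          continuous_const.mul (Real.continuous_sin.mul Real.continuous_cos)
        have hcmp := cmp_le _ _ _ hH hh c b hcmem.1 hcmem.2 le_rfl (hcont_f1.mono hsubcb) ?ptw
        case ptw =>
          intro t ht
          have htm : t ∈ Icc a b := hsubcb ht
          have hw := hwp t ht
          have hs := (hs01 (φ t)).1
          have hs1 := (hs01 (φ t)).2
          have hqge := hqA t htm
          have hqle := hqB t htm
          have hd := hden (φ t)
          have hdge := hdenge (φ t)
          have hPt := hPge t htm
          have hc0 : (0:ℝ) ≤ 11 * (q b - q a) / (100 * z ^ 2) :=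
            div_nonneg (by linarith) (by positivity)
          have t1 : (Real.sin (φ t) * Real.cos (φ t)) * Real.sin (φ t) ^ 2 / (z - q a / z * Real.sin (φ t) ^ 2)
              ≤ Real.sin (φ t) * Real.cos (φ t) / (10 / 11 * z) :=
            div_le_div₀ hw (by nlinarith) (by linarith) hdge
          have t2 : (q t - q a) * ((Real.sin (φ t) * Real.cos (φ t)) * Real.sin (φ t) ^ 2 / (z - q a / z * Real.sin (φ t) ^ 2))
              ≤ (q b - q a) * (Real.sin (φ t) * Real.cos (φ t) / (10 / 11 * z)) :=
            mul_le_mul (by linarith) t1 (div_nonneg (mul_nonneg hw hs) hd.le) (by linarith)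
          have t3 : q a / z ^ 2 * ((q t - q a) * ((Real.sin (φ t) * Real.cos (φ t)) * Real.sin (φ t) ^ 2 / (z - q a / z * Real.sin (φ t) ^ 2)))
              ≤ 1 / 11 * ((q b - q a) * (Real.sin (φ t) * Real.cos (φ t) / (10 / 11 * z))) :=
            mul_le_mul hqaz2 t2 (mul_nonneg (by linarith) (div_nonneg (mul_nonneg hw hs) hd.le)) (by norm_num)
          have t4 : 1 / 11 * ((q b - q a) * (Real.sin (φ t) * Real.cos (φ t) / (10 / 11 * z)))
              = 11 * (q b - q a) / (100 * z ^ 2) * (Real.sin (φ t) * Real.cos (φ t)) * (10 / 11 * z) := by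
            field_simp; ring
          have t5 : 11 * (q b - q a) / (100 * z ^ 2) * (Real.sin (φ t) * Real.cos (φ t)) * (10 / 11 * z)
              ≤ 11 * (q b - q a) / (100 * z ^ 2) * (Real.sin (φ t) * Real.cos (φ t)) * P t :=
            mul_le_mul_of_nonneg_left hPt (mul_nonneg hc0 hw)
          calc q a / z ^ 2 * ((q t - q a) * ((Real.sin (φ t) * Real.cos (φ t)) * Real.sin (φ t) ^ 2 / (z - q a / z * Real.sin (φ t) ^ 2)))
              ≤ 1 / 11 * ((q b - q a) * (Real.sin (φ t) * Real.cos (φ t) / (10 / 11 * z))) := t3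
            _ = 11 * (q b - q a) / (100 * z ^ 2) * (Real.sin (φ t) * Real.cos (φ t)) * (10 / 11 * z) := t4
            _ ≤ 11 * (q b - q a) / (100 * z ^ 2) * (Real.sin (φ t) * Real.cos (φ t)) * P t := t5
        have hval : 11 * (q b - q a) / (100 * z ^ 2) * (Real.sin (φ b) ^ 2 / 2)
            - 11 * (q b - q a) / (100 * z ^ 2) * (Real.sin (φ c) ^ 2 / 2)
            = 11 * (q b - q a) / (200 * z ^ 2) := by
          have hzne : z ≠ 0 := ne_of_gt hz0
          rw [hsb2, hφc, hsγ]
          ring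
        linarith [hcmp, hval.ge, hval.le]
      linarith
    have hf2 : (∫ t in a..b, (q t - q a) / z * (Real.sin (φ t) * Real.cos (φ t)))
        ≤ 11 * (q b - q a) / (20 * z ^ 2) := by
      rw [← intervalIntegral.integral_add_adjacent_intervals (b := c)
        (mkInt a c le_rfl hcmem.1 hcmem.2 hcont_f2)
        (mkInt c b hcmem.1 hcmem.2 le_rfl hcont_f2)]
      have hpart1 : (∫ t in a..c, (q t - q a) / z * (Real.sin (φ t) * Real.cos (φ t))) ≤ 0 := by
        have hmono0 := intervalIntegral.integral_mono_on hcmem.1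
          (mkInt a c le_rfl hcmem.1 hcmem.2 hcont_f2)
          (intervalIntegrable_const (c := (0:ℝ)))
          (fun t ht => ?_)
        · simpa using hmono0
        · have htm : t ∈ Icc a b := hsubac ht
          have hw := hwn t ht
          have hqge := hqA t htm
          exact mul_nonpos_of_nonneg_of_nonpos (div_nonneg (by linarith) hz0.le) hw
      have hpart2 : (∫ t in c..b, (q t - q a) / z * (Real.sin (φ t) * Real.cos (φ t)))
          ≤ 11 * (q b - q a) / (20 * z ^ 2) := by
        have hH : ∀ u : ℝ, HasDerivAt (fun v => 11 * (q b - q a) / (10 * z ^ 2) * (Real.sin v ^ 2 / 2))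
            (11 * (q b - q a) / (10 * z ^ 2) * (Real.sin u * Real.cos u)) u :=
          fun u => (hd_sc u).const_mul _
        have hh : Continuous (fun u : ℝ => 11 * (q b - q a) / (10 * z ^ 2) * (Real.sin u * Real.cos u)) :=
          continuous_const.mul (Real.continuous_sin.mul Real.continuous_cos)
        have hcmp := cmp_le _ _ _ hH hh c b hcmem.1 hcmem.2 le_rfl (hcont_f2.mono hsubcb) ?ptw
        case ptw =>
          intro t ht
          have htm : t ∈ Icc a b := hsubcb ht
          have hw := hwp t ht
          have hqge := hqA t htm
          have hqle := hqB t htm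
          have hPt := hPge t htm
          have hc0 : (0:ℝ) ≤ 11 * (q b - q a) / (10 * z ^ 2) :=
            div_nonneg (by linarith) (by positivity)
          have t1 : (q t - q a) / z * (Real.sin (φ t) * Real.cos (φ t))
              ≤ (q b - q a) / z * (Real.sin (φ t) * Real.cos (φ t)) :=
            mul_le_mul_of_nonneg_right ((div_le_div_iff_of_pos_right hz0).mpr (by linarith)) hw
          have t2 : (q b - q a) / z * (Real.sin (φ t) * Real.cos (φ t))
              = 11 * (q b - q a) / (10 * z ^ 2) * (Real.sin (φ t) * Real.cos (φ t)) * (10 / 11 * z) := by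
            field_simp
          have t3 : 11 * (q b - q a) / (10 * z ^ 2) * (Real.sin (φ t) * Real.cos (φ t)) * (10 / 11 * z)
              ≤ 11 * (q b - q a) / (10 * z ^ 2) * (Real.sin (φ t) * Real.cos (φ t)) * P t :=
            mul_le_mul_of_nonneg_left hPt (mul_nonneg hc0 hw)
          linarith
        have hval : 11 * (q b - q a) / (10 * z ^ 2) * (Real.sin (φ b) ^ 2 / 2)
            - 11 * (q b - q a) / (10 * z ^ 2) * (Real.sin (φ c) ^ 2 / 2)
            = 11 * (q b - q a) / (20 * z ^ 2) := by
          have hzne : z ≠ 0 := ne_of_gt hz0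
          rw [hsb2, hφc, hsγ]
          ring
        linarith [hcmp, hval.ge, hval.le]
      linarith
    have hsum : 11 * (q b - q a) / (200 * z ^ 2) + 11 * (q b - q a) / (20 * z ^ 2)
        = 121 / 200 * ((q b - q a) / z ^ 2) := by
      field_simp
      ring
    linarith
  -- gamma * K bound
  have hγ0 : (0:ℝ) ≤ γc := by rw [hγdef]; positivity
  have hγz : γc ≤ z := by rw [hγdef]; exact hi
  have hγK : γc * (∫ t in a..b, q t / z * (Real.sin (φ t) * Real.cos (φ t)))
      ≤ 847 / 10000 * π * (q a / z ^ 2) := by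
    have hz2 : (0:ℝ) < z ^ 2 := by positivity
    have hzne : z ≠ 0 := ne_of_gt hz0
    have hδz : (q b - q a) * z ≤ 7 * π / 50 * q a := by
      have h := mul_le_mul_of_nonneg_right hδ hz0.le
      have e : 7 * π / 50 * (q a / z) * z = 7 * π / 50 * q a := by field_simp
      linarith
    have h3 : z * (121 / 200 * ((q b - q a) / z ^ 2)) ≤ 847 / 10000 * π * (q a / z ^ 2) := by
      have e1 : z * (121 / 200 * ((q b - q a) / z ^ 2)) = 121 / 200 * ((q b - q a) * z / z ^ 2) := by
        field_simp
      have e2 : 847 / 10000 * π * (q a / z ^ 2) = 121 / 200 * ((7 * π / 50 * q a) / z ^ 2) := by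
        field_simp; ring
      have h4 : (q b - q a) * z / z ^ 2 ≤ (7 * π / 50 * q a) / z ^ 2 :=
        (div_le_div_iff_of_pos_right hz2).mpr hδz
      rw [e1, e2]
      linarith
    have hbd0 : (0:ℝ) ≤ z * (121 / 200 * ((q b - q a) / z ^ 2)) := by
      apply mul_nonneg hz0.le
      apply mul_nonneg (by norm_num)
      exact div_nonneg (by linarith) hz2.le
    rcases le_or_gt (∫ t in a..b, q t / z * (Real.sin (φ t) * Real.cos (φ t))) 0 with hK0 | hK0
    · have h5 : γc * (∫ t in a..b, q t / z * (Real.sin (φ t) * Real.cos (φ t))) ≤ 0 :=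
        mul_nonpos_of_nonneg_of_nonpos hγ0 hK0
      linarith
    · have h1 : γc * (∫ t in a..b, q t / z * (Real.sin (φ t) * Real.cos (φ t)))
          ≤ z * (∫ t in a..b, q t / z * (Real.sin (φ t) * Real.cos (φ t))) :=
        mul_le_mul_of_nonneg_right hγz hK0.le
      have h2 : z * (∫ t in a..b, q t / z * (Real.sin (φ t) * Real.cos (φ t)))
          ≤ z * (121 / 200 * ((q b - q a) / z ^ 2)) :=
        mul_le_mul_of_nonneg_left hKK hz0.le
      linarith
  -- the inner integral as an explicit function
  have hGeq : ∀ x ∈ Icc a b, (∫ s in a..x, q s / z * Real.sin (φ s) ^ 2)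
      = z * (x - a) - (φ x - φ a) := by
    intro x hx
    have heq : EqOn (fun t => q t / z * Real.sin (φ t) ^ 2) (fun t => z - 1 * P t) (uIcc a x) := by
      intro t _
      simp only
      rw [hPx]; ring
    rw [intervalIntegral.integral_congr heq,
      intervalIntegral.integral_sub intervalIntegrable_const
        (intHP (fun _ => (1:ℝ)) continuous_const a x le_rfl hx.1 hx.2),
      intervalIntegral.integral_const]
    have hkey := key (fun u => u) (fun _ => (1:ℝ)) (fun u => hasDerivAt_id' u)
      continuous_const a x le_rfl hx.1 hx.2
    rw [hkey, smul_eq_mul]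
    ring
  have hGnn : ∀ x ∈ Icc a b, 0 ≤ z * (x - a) - (φ x - φ a) := by
    intro x hx
    rw [← hGeq x hx]
    apply intervalIntegral.integral_nonneg hx.1
    intro t ht
    have htm : t ∈ Icc a b := ⟨ht.1, le_trans ht.2 hx.2⟩
    have := hq0 t htm
    positivity
  have hGmono : ∀ x ∈ Icc a b, z * (x - a) - (φ x - φ a) ≤ z * (b - a) - (φ b - φ a) := by
    intro x hx
    have hxb : Icc x b ⊆ Icc a b := Icc_subset_Icc hx.1 le_rfl
    have hkey := key (fun u => u) (fun _ => (1:ℝ)) (fun u => hasDerivAt_id' u)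
      continuous_const x b hx.1 hx.2 le_rfl
    have hnn : 0 ≤ ∫ t in x..b, z - 1 * P t := by
      apply intervalIntegral.integral_nonneg hx.2
      intro t ht
      have := hPle t (hxb ht)
      linarith
    have hsplit2 : (∫ t in x..b, z - 1 * P t) = z * (b - x) - (φ b - φ x) := by
      rw [intervalIntegral.integral_sub intervalIntegrable_const
        (intHP (fun _ => (1:ℝ)) continuous_const x b hx.1 hx.2 le_rfl),
        intervalIntegral.integral_const, hkey, smul_eq_mul]
      ring
    rw [hsplit2] at hnn
    linarith
  -- bound for the double-integral term
  have hcontG : ContinuousOn (fun t => z * (t - a) - (φ t - φ a)) (Icc a b) := by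
    apply ContinuousOn.sub
    · exact (continuous_const.mul (continuous_id.sub continuous_const)).continuousOn
    · exact hφcont.sub continuousOn_const
  have hcontI : ContinuousOn (fun t => q t / z * Real.sin (φ t) * Real.cos (φ t)
      * (z * (t - a) - (φ t - φ a))) (Icc a b) := by
    apply ContinuousOn.mul _ hcontG
    exact ((hqcont.div_const z).mul (Real.continuous_sin.comp_continuousOn hφcont)).mul
      (Real.continuous_cos.comp_continuousOn hφcont)
  have hGbUp : z * (b - a) - (φ b - φ a) ≤ q b / z ^ 2 * (43 * π / 80) := by
    rw [← hGeq b (right_mem_Icc.mpr hab)]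
    exact hT0up
  have hGb0 : 0 ≤ z * (b - a) - (φ b - φ a) := hGnn b (right_mem_Icc.mpr hab)
  have hI2 : (∫ t in a..b, q t / z * Real.sin (φ t) * Real.cos (φ t) * (z * (t - a) - (φ t - φ a)))
      ≤ 473 / 1600 * π * ((q b / z ^ 2) * (q b / z ^ 2)) := by
    rw [← intervalIntegral.integral_add_adjacent_intervals (b := c)
      (mkInt a c le_rfl hcmem.1 hcmem.2 hcontI)
      (mkInt c b hcmem.1 hcmem.2 le_rfl hcontI)]
    have hpart1 : (∫ t in a..c, q t / z * Real.sin (φ t) * Real.cos (φ t)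
        * (z * (t - a) - (φ t - φ a))) ≤ 0 := by
      have hmono0 := intervalIntegral.integral_mono_on hcmem.1
        (mkInt a c le_rfl hcmem.1 hcmem.2 hcontI)
        (intervalIntegrable_const (c := (0:ℝ)))
        (fun t ht => ?_)
      · simpa using hmono0
      · have htm : t ∈ Icc a b := hsubac ht
        have hw := hwn t ht
        have hg := hGnn t htm
        have hqt := hq0 t htm
        have e : q t / z * Real.sin (φ t) * Real.cos (φ t) * (z * (t - a) - (φ t - φ a))
            = q t / z * ((Real.sin (φ t) * Real.cos (φ t)) * (z * (t - a) - (φ t - φ a))) := by ring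
        rw [e]
        exact mul_nonpos_of_nonneg_of_nonpos (div_nonneg hqt hz0.le)
          (mul_nonpos_of_nonpos_of_nonneg hw hg)
    have hpart2 : (∫ t in c..b, q t / z * Real.sin (φ t) * Real.cos (φ t)
        * (z * (t - a) - (φ t - φ a)))
        ≤ (z * (b - a) - (φ b - φ a)) * (11 * q b / (10 * z ^ 2)) * (1 / 2) := by
      have hH : ∀ u : ℝ, HasDerivAt
          (fun v => (z * (b - a) - (φ b - φ a)) * (11 * q b / (10 * z ^ 2)) * (Real.sin v ^ 2 / 2))
          ((z * (b - a) - (φ b - φ a)) * (11 * q b / (10 * z ^ 2)) * (Real.sin u * Real.cos u)) u :=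
        fun u => (hd_sc u).const_mul _
      have hh : Continuous (fun u : ℝ =>
          (z * (b - a) - (φ b - φ a)) * (11 * q b / (10 * z ^ 2)) * (Real.sin u * Real.cos u)) :=
        continuous_const.mul (Real.continuous_sin.mul Real.continuous_cos)
      have hcmp := cmp_le _ _ _ hH hh c b hcmem.1 hcmem.2 le_rfl (hcontI.mono hsubcb) ?ptw
      case ptw =>
        intro t ht
        have htm : t ∈ Icc a b := hsubcb ht
        have hw := hwp t ht
        have hqt := hq0 t htm
        have hqle := hqB t htm
        have hPt := hPge t htm
        have hgt := hGnn t htm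
        have hgm := hGmono t htm
        have hc0 : (0:ℝ) ≤ 11 * q b / (10 * z ^ 2) := div_nonneg (by linarith) (by positivity)
        have t0 : q t / z * Real.sin (φ t) * Real.cos (φ t) * (z * (t - a) - (φ t - φ a))
            = (q t / z * (Real.sin (φ t) * Real.cos (φ t))) * (z * (t - a) - (φ t - φ a)) := by ring
        have t1 : (q t / z * (Real.sin (φ t) * Real.cos (φ t))) * (z * (t - a) - (φ t - φ a))
            ≤ (q t / z * (Real.sin (φ t) * Real.cos (φ t))) * (z * (b - a) - (φ b - φ a)) := by
          apply mul_le_mul_of_nonneg_left hgm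
          exact mul_nonneg (div_nonneg hqt hz0.le) hw
        have t2 : (q t / z * (Real.sin (φ t) * Real.cos (φ t))) * (z * (b - a) - (φ b - φ a))
            ≤ (q b / z * (Real.sin (φ t) * Real.cos (φ t))) * (z * (b - a) - (φ b - φ a)) := by
          apply mul_le_mul_of_nonneg_right _ hGb0
          exact mul_le_mul_of_nonneg_right ((div_le_div_iff_of_pos_right hz0).mpr hqle) hw
        have t3 : (q b / z * (Real.sin (φ t) * Real.cos (φ t))) * (z * (b - a) - (φ b - φ a))
            = (z * (b - a) - (φ b - φ a)) * (11 * q b / (10 * z ^ 2)) * (Real.sin (φ t) * Real.cos (φ t))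
              * (10 / 11 * z) := by
          field_simp
        have t4 : (z * (b - a) - (φ b - φ a)) * (11 * q b / (10 * z ^ 2)) * (Real.sin (φ t) * Real.cos (φ t))
              * (10 / 11 * z)
            ≤ (z * (b - a) - (φ b - φ a)) * (11 * q b / (10 * z ^ 2)) * (Real.sin (φ t) * Real.cos (φ t))
              * P t := by
          apply mul_le_mul_of_nonneg_left hPt
          exact mul_nonneg (mul_nonneg hGb0 hc0) hw
        linarith [t0.le, t0.ge, t1, t2, t3.le, t3.ge, t4]
      have hval : (z * (b - a) - (φ b - φ a)) * (11 * q b / (10 * z ^ 2)) * (Real.sin (φ b) ^ 2 / 2)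
          - (z * (b - a) - (φ b - φ a)) * (11 * q b / (10 * z ^ 2)) * (Real.sin (φ c) ^ 2 / 2)
          = (z * (b - a) - (φ b - φ a)) * (11 * q b / (10 * z ^ 2)) * (1 / 2) := by
        rw [hsb2, hφc, hsγ]
        ring
      linarith [hcmp, hval.ge, hval.le]
    have hfin : (z * (b - a) - (φ b - φ a)) * (11 * q b / (10 * z ^ 2)) * (1 / 2)
        ≤ 473 / 1600 * π * ((q b / z ^ 2) * (q b / z ^ 2)) := by
      have hc0 : (0:ℝ) ≤ 11 * q b / (10 * z ^ 2) * (1 / 2) :=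
        mul_nonneg (div_nonneg (by linarith) (by positivity)) (by norm_num)
      have h1 : (z * (b - a) - (φ b - φ a)) * (11 * q b / (10 * z ^ 2)) * (1 / 2)
          ≤ (q b / z ^ 2 * (43 * π / 80)) * (11 * q b / (10 * z ^ 2)) * (1 / 2) := by
        have := mul_le_mul_of_nonneg_right hGbUp hc0
        calc (z * (b - a) - (φ b - φ a)) * (11 * q b / (10 * z ^ 2)) * (1 / 2)
            = (z * (b - a) - (φ b - φ a)) * (11 * q b / (10 * z ^ 2) * (1 / 2)) := by ring
          _ ≤ (q b / z ^ 2 * (43 * π / 80)) * (11 * q b / (10 * z ^ 2) * (1 / 2)) := this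
          _ = (q b / z ^ 2 * (43 * π / 80)) * (11 * q b / (10 * z ^ 2)) * (1 / 2) := by ring
      have h2 : (q b / z ^ 2 * (43 * π / 80)) * (11 * q b / (10 * z ^ 2)) * (1 / 2)
          = 473 / 1600 * π * ((q b / z ^ 2) * (q b / z ^ 2)) := by
        ring
      linarith
    linarith
  -- assembling everything
  have hcont3 : ContinuousOn (fun t => q t / z * ((φ t - γc) * (Real.sin (φ t) * Real.cos (φ t)))) (Icc a b) := by
    apply (hqcont.div_const z).mul
    exact (hφcont.sub continuousOn_const).mul hcontw
  have hint1 : IntervalIntegrable (fun t => q t / z * Real.sin (φ t) ^ 2) MeasureTheory.volume a b :=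
    mkInt a b le_rfl hab le_rfl
      ((hqcont.div_const z).mul ((Real.continuous_sin.comp_continuousOn hφcont).pow 2))
  have hint2 : IntervalIntegrable (fun t => q t / z * (Real.sin (φ t) * Real.cos (φ t))) MeasureTheory.volume a b := mkInt a b le_rfl hab le_rfl ((hqcont.div_const z).mul hcontw)
  have hint3 := mkInt a b le_rfl hab le_rfl hcont3
  have hsplit : (∫ x in a..b, (q x / z) *
        (Real.sin (φ x) ^ 2 - φ x * Real.sin (φ x) * Real.cos (φ x)))
      = (∫ t in a..b, q t / z * Real.sin (φ t) ^ 2)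
        - (γc * (∫ t in a..b, q t / z * (Real.sin (φ t) * Real.cos (φ t)))
          + (∫ t in a..b, q t / z * ((φ t - γc) * (Real.sin (φ t) * Real.cos (φ t))))) := by
    have heq : EqOn (fun x => (q x / z) *
        (Real.sin (φ x) ^ 2 - φ x * Real.sin (φ x) * Real.cos (φ x)))
        (fun x => q x / z * Real.sin (φ x) ^ 2
          - (γc * (q x / z * (Real.sin (φ x) * Real.cos (φ x)))
            + q x / z * ((φ x - γc) * (Real.sin (φ x) * Real.cos (φ x))))) (uIcc a b) := by
      intro x _
      simp only
      ring
    rw [intervalIntegral.integral_congr heq,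
      intervalIntegral.integral_sub hint1 ((hint2.const_mul γc).add hint3),
      intervalIntegral.integral_add (hint2.const_mul γc) hint3,
      intervalIntegral.integral_const_mul]
  have hcongrI : (∫ x in a..b, (q x / z) * Real.sin (φ x) * Real.cos (φ x) *
        (∫ s in a..x, (q s / z) * Real.sin (φ s) ^ 2))
      = ∫ t in a..b, q t / z * Real.sin (φ t) * Real.cos (φ t) * (z * (t - a) - (φ t - φ a)) := by
    apply intervalIntegral.integral_congr
    intro x hx
    rw [Set.uIcc_of_le hab] at hx
    simp only
    rw [hGeq x hx]
  rw [ge_iff_le, hsplit, hcongrI]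
  -- final numeric computation
  have hz2 : (0:ℝ) < z ^ 2 := by positivity
  have hA0 : (0:ℝ) ≤ q a / z := div_nonneg hqa0 hz0.le
  have h1 : π * (q a / z) ≤ z * (q a / z) := mul_le_mul_of_nonneg_right hzπ hA0
  have e : z * (q a / z) = q a := by field_simp
  have hqb57 : q b ≤ 57 / 50 * q a := by linarith [hδ]
  have hY : q b / z ^ 2 ≤ 57 / 50 * (q a / z ^ 2) := by
    have h4 : q b / z ^ 2 ≤ (57 / 50 * q a) / z ^ 2 := (div_le_div_iff_of_pos_right hz2).mpr hqb57
    have e2 : (57 / 50 * q a) / z ^ 2 = 57 / 50 * (q a / z ^ 2) := by ring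
    exact le_of_le_of_eq h4 e2
  have hY11 : q b / z ^ 2 ≤ 1 / 11 := by
    rw [div_le_div_iff₀ hz2 (by norm_num : (0:ℝ) < 11)]
    linarith [hq11 b (hsub (right_mem_Icc.mpr hab))]
  have hY0 : (0:ℝ) ≤ q b / z ^ 2 := div_nonneg hqb0 hz2.le
  have hX0 : (0:ℝ) ≤ q a / z ^ 2 := div_nonneg hqa0 hz2.le
  exact final_arith _ _ _ _ _ _ π hπ hT0low hγK hR hI2 hY hY11 hY0 hX0
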